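/- Let 𝔽 be an infinite field and let B be a nontrivial commutative 𝔽-algebra. Let f ∈ B[[T]] be a power series with zero constant term whose coefficient of T equals 1. Suppose that for every a ∈ 𝔽 there exists a power series φ_a ∈ B[[T]] with zero constant term, whose coefficient of T equals the image of a in B, such that f(φ_a(T)) = φ_a(f(T)). Then f = T. -/

import Mathlib

/-- Substitution of a power series `g` (intended to have zero constant coefficient)
into a one-variable power series `f`, i.e. `f(g) = ∑ₙ (coeffₙ f) · gⁿ`.  Each
coefficient of the result is given by the finite truncated sum, which agrees with the
genuine substitution whenever `g` has zero constant coefficient. -/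
noncomputable def PowerSeries.substPS {R : Type*} [CommRing R]
    (g f : PowerSeries R) : PowerSeries R :=
  PowerSeries.mk fun d => ∑ n ∈ Finset.range (d + 1),
    PowerSeries.coeff n f * PowerSeries.coeff d (g ^ n)

namespace RigidityAux

open PowerSeries Finset

variable {B : Type*} [CommRing B]

lemma coeff_pow_eq_zero_of_lt {g : PowerSeries B} (hg : constantCoeff g = 0)
    {m k : ℕ} (h : m < k) : coeff m (g ^ k) = 0 := by
  obtain ⟨u, rfl⟩ := X_dvd_iff.mpr hg
  rw [mul_pow, coeff_X_pow_mul', if_neg (not_le.mpr h)]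

lemma coeff_pow_self {g : PowerSeries B} (hg : constantCoeff g = 0) (k : ℕ) :
    coeff k (g ^ k) = (coeff 1 g) ^ k := by
  obtain ⟨u, rfl⟩ := X_dvd_iff.mpr hg
  have h1 : coeff 1 ((X : PowerSeries B) * u) = constantCoeff u := by
    have := coeff_X_pow_mul u 1 0
    simpa using this
  rw [mul_pow, coeff_X_pow_mul', if_pos le_rfl, Nat.sub_self, h1,
    coeff_zero_eq_constantCoeff, map_pow]

/-- If `f = X + (terms of degree ≥ n)` with linear coefficient `1`, then for
`2 ≤ k < n` the coefficient of `Xⁿ` in `f ^ k` vanishes. -/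
lemma coeff_pow_mid {f : PowerSeries B} {n : ℕ}
    (h0 : constantCoeff f = 0) (h1 : coeff 1 f = 1)
    (hmid : ∀ j, 2 ≤ j → j < n → coeff j f = 0)
    {k : ℕ} (hk2 : 2 ≤ k) (hkn : k < n) : coeff n (f ^ k) = 0 := by
  obtain ⟨u, rfl⟩ := X_dvd_iff.mpr h0
  -- coefficients of `u` in terms of those of `f = X * u`
  have hcu : ∀ d : ℕ, coeff d u = coeff (d + 1) ((X : PowerSeries B) * u) := by
    intro d
    have := coeff_X_pow_mul u 1 d
    simpa using this
  -- `u - 1` is divisible by `X ^ (n - 1)`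
  have hv : (X : PowerSeries B) ^ (n - 1) ∣ (u - 1) := by
    rw [X_pow_dvd_iff]
    intro m hm
    rcases Nat.eq_zero_or_pos m with rfl | hmpos
    · have : constantCoeff u = 1 := by
        have := hcu 0
        rw [coeff_zero_eq_constantCoeff] at this
        rw [this]; simpa using h1
      simp [coeff_zero_eq_constantCoeff, this]
    · have hm2 : 2 ≤ m + 1 := by omega
      have hmn : m + 1 < n := by omega
      have : coeff m u = 0 := by
        rw [hcu m]; exact hmid (m + 1) hm2 hmn
      have hone : coeff m (1 : PowerSeries B) = 0 := by
        simp [coeff_one, Nat.pos_iff_ne_zero.mp hmpos]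
      simp [map_sub, this, hone]
  -- hence `u ^ k - 1` is divisible by `X ^ (n - 1)`
  have hvk : (X : PowerSeries B) ^ (n - 1) ∣ (u ^ k - 1) := by
    refine hv.trans ?_
    have := sub_dvd_pow_sub_pow u 1 k
    simpa using this
  have hnk : coeff (n - k) (u ^ k) = 0 := by
    have hz : coeff (n - k) (u ^ k - 1) = 0 := by
      rw [X_pow_dvd_iff] at hvk
      exact hvk _ (by omega)
    have hone : coeff (n - k) (1 : PowerSeries B) = 0 := by
      have : n - k ≠ 0 := by omega
      simp [coeff_one, this]
    have := hz
    rw [map_sub, hone, sub_zero] at this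
    exact this
  rw [mul_pow, coeff_X_pow_mul', if_pos (le_of_lt hkn), hnk]

end RigidityAux

/-- Rigidity underlying Lemma 3.4.6: let `𝔽` be an infinite field, `B` a nontrivial
commutative `𝔽`-algebra, and `f ∈ B[[T]]` a power series with zero constant term and
linear coefficient `1`.  If for every `a ∈ 𝔽` there is a power series `φ_a ∈ B[[T]]`
with zero constant term and linear coefficient (the image of) `a` such that
`f(φ_a(T)) = φ_a(f(T))`, then `f = T`. -/
theorem rigidity_of_commuting_powerSeries {F B : Type*} [Field F] [Infinite F]
    [CommRing B] [Nontrivial B] [Algebra F B]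
    (f : PowerSeries B)
    (h0 : PowerSeries.constantCoeff f = 0)
    (h1 : PowerSeries.coeff 1 f = 1)
    (hcomm : ∀ a : F, ∃ φ : PowerSeries B,
      PowerSeries.constantCoeff φ = 0 ∧
      PowerSeries.coeff 1 φ = algebraMap F B a ∧
      PowerSeries.substPS φ f = PowerSeries.substPS f φ) :
    f = PowerSeries.X := by
  classical
  open PowerSeries Finset RigidityAux in
  by_contra hne
  have hex : ∃ n, coeff n f ≠ coeff n (X : PowerSeries B) := by
    by_contra h
    push_neg at h
    exact hne (PowerSeries.ext h)
  set n := Nat.find hex with hn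
  have hnspec : coeff n f ≠ coeff n (X : PowerSeries B) := Nat.find_spec hex
  have hmin : ∀ m < n, coeff m f = coeff m (X : PowerSeries B) := fun m hm =>
    not_not.mp (Nat.find_min hex hm)
  have hn2 : 2 ≤ n := by
    by_contra h
    interval_cases n
    · exact hnspec (by simpa [coeff_zero_eq_constantCoeff] using h0)
    · exact hnspec (by simp [h1, coeff_X])
  set c := coeff n f with hc
  have hcne : c ≠ 0 := by
    intro h
    apply hnspec
    rw [← hc] at *
    rw [h, coeff_X, if_neg (by omega)]
  have hfmid : ∀ j, 2 ≤ j → j < n → coeff j f = 0 := by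
    intro j hj2 hjn
    rw [hmin j hjn, coeff_X, if_neg (by omega)]
  -- find `a : F` with `a ^ n ≠ a`
  obtain ⟨a, ha⟩ : ∃ a : F, a ^ n - a ≠ 0 := by
    set p : Polynomial F := Polynomial.X ^ n - Polynomial.X with hp
    have hpne : p ≠ 0 := by
      intro h
      have : p.coeff n = 0 := by rw [h]; simp
      rw [hp] at this
      simp [Polynomial.coeff_X_pow, Polynomial.coeff_X] at this
      rw [if_neg (by omega : ¬ (1 : ℕ) = n)] at this
      simpa using this
    obtain ⟨a, ha⟩ := Infinite.exists_notMem_finset p.roots.toFinset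
    refine ⟨a, fun h => ha ?_⟩
    rw [Multiset.mem_toFinset, Polynomial.mem_roots hpne]
    simp [hp, Polynomial.IsRoot, h]
  obtain ⟨φ, hφ0, hφ1, hsub⟩ := hcomm a
  set aB : B := algebraMap F B a with haB
  -- compute coefficient `n` of both sides
  have hE := congrArg (coeff n) hsub
  rw [PowerSeries.substPS, PowerSeries.substPS, coeff_mk, coeff_mk] at hE
  have hL : ∑ k ∈ range (n + 1), coeff k f * coeff n (φ ^ k)
      = coeff n φ + c * aB ^ n := by
    rw [Finset.sum_range_succ, coeff_pow_self hφ0, hφ1, ← hc]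
    congr 1
    rw [Finset.sum_eq_single 1]
    · simp [h1]
    · intro k hk hk1
      rcases Nat.eq_zero_or_pos k with rfl | hkpos
      · simp [← coeff_zero_eq_constantCoeff_apply, h0]
      · have hk2 : 2 ≤ k := by omega
        rw [hfmid k hk2 (Finset.mem_range.mp hk), zero_mul]
    · intro h
      exact absurd (Finset.mem_range.mpr (by omega)) h
  have hR : ∑ k ∈ range (n + 1), coeff k φ * coeff n (f ^ k)
      = aB * c + coeff n φ := by
    rw [Finset.sum_range_succ, coeff_pow_self h0, h1, one_pow, mul_one]
    congr 1
    rw [Finset.sum_eq_single 1]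
    · simp [hφ1, ← hc]
    · intro k hk hk1
      rcases Nat.eq_zero_or_pos k with rfl | hkpos
      · simp [← coeff_zero_eq_constantCoeff_apply, hφ0]
      · have hk2 : 2 ≤ k := by omega
        rw [coeff_pow_mid h0 h1 hfmid hk2 (Finset.mem_range.mp hk), mul_zero]
    · intro h
      exact absurd (Finset.mem_range.mpr (by omega)) h
  rw [hL, hR] at hE
  have hkey : c * (aB ^ n - aB) = 0 := by ring_nf; linear_combination hE
  have hunit : IsUnit (aB ^ n - aB) := by
    have : aB ^ n - aB = algebraMap F B (a ^ n - a) := by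
      rw [map_sub, map_pow, haB]
    rw [this]
    exact (isUnit_iff_ne_zero.mpr ha).map (algebraMap F B)
  exact hcne (by
    obtain ⟨u, hu⟩ := hunit
    have := congrArg (· * (↑u⁻¹ : B)) hkey
    simpa [← hu, mul_assoc] using this)
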